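/- Fix an integer d ≥ 1 and reals m₁, m₂ > 0, n_{∞,1}, n_{∞,2} > 0, parameters α, δ, γ ∈ ℝ and ε > 0, and set α̃ = ε(1−α), δ̃ = (m₁/m₂) ε (1−δ), γ̃ = (1/d) ε m₁ (1−δ)((m₁/m₂) ε (δ−1) + δ + 1) − ε γ. Set f₂^∞(v) = n_{∞,2}(m₂/(2π))^{d/2} exp(−m₂|v|²/2). For (σ₁, σ₂, μ₁, μ₂, τ₁, τ₂) near 0, define n_i = n_{∞,i} + σ_i, P_i = n_{∞,i} + (1/d)(τ_i − m_i|μ_i|²/n_i), the mixture momentum μ₂₁ = δ̃ (n₂/n₁) μ₁ + (1−δ̃) μ₂, the mixture pressure P₂₁ = α̃ (n₂/n₁) P₁ + (1−α̃) P₂ + γ̃ |(n₂/n₁)μ₁ − μ₂|²/n₂, and M₂₁(v) = n₂^{1+d/2}/(2π P₂₁/m₂)^{d/2} · exp(− m₂ |v n₂ − μ₂₁|² / (2 P₂₁ n₂)). Then M₂₁ is differentiable at the origin for each fixed v, with partial derivatives there: ∂_{σ₁} M₂₁ = f₂^∞(v) (1/(2 n_{∞,1})) ε(1−α)(d − m₂|v|²),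 ∂_{σ₂} M₂₁ = f₂^∞(v) (1/n_{∞,2}) (1 + ((1−ε(1−α))/2)(d − m₂|v|²)), ∇_{μ₁} M₂₁ = f₂^∞(v) (ε(1−δ) m₁/n_{∞,1}) v, ∇_{μ₂} M₂₁ = f₂^∞(v) ((1 − (m₁/m₂)ε(1−δ)) m₂/n_{∞,2}) v, ∂_{τ₁} M₂₁ = f₂^∞(v) (ε(1−α)/(2 n_{∞,1})) ((m₂|v|²)/d − 1), and ∂_{τ₂} M₂₁ = f₂^∞(v) ((1−ε(1−α))/(2 n_{∞,2})) ((m₂|v|²)/d − 1). -/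

import Mathlib

open Real

/-- The equilibrium Maxwellian of species 2:
`f₂^∞(v) = n_{∞,2} (m₂/(2π))^{d/2} exp(−m₂|v|²/2)`. -/
noncomputable def equilMaxwellian2 (d : ℕ) (m₂ nInf2 : ℝ) (v : EuclideanSpace ℝ (Fin d)) : ℝ :=
  nInf2 * (m₂ / (2 * Real.pi)) ^ ((d : ℝ) / 2) * Real.exp (-m₂ * ‖v‖ ^ 2 / 2)

/-- The interspecies Maxwellian `M₂₁(σ₁,σ₂,μ₁,μ₂,τ₁,τ₂)(v)` of species 2 in the
two-species BGK model, with `n_i = n_{∞,i} + σ_i`, `P_i = n_{∞,i} + (1/d)(τ_i − m_i|μ_i|²/n_i)`,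
transformed parameters `α̃ = ε(1−α)`, `δ̃ = (m₁/m₂)ε(1−δ)`,
`γ̃ = (1/d)εm₁(1−δ)((m₁/m₂)ε(δ−1)+δ+1) − εγ`, mixture momentum
`μ₂₁ = δ̃(n₂/n₁)μ₁ + (1−δ̃)μ₂` and mixture pressure
`P₂₁ = α̃(n₂/n₁)P₁ + (1−α̃)P₂ + γ̃|(n₂/n₁)μ₁ − μ₂|²/n₂`. -/
noncomputable def interMaxwellian21 (d : ℕ) (m₁ m₂ nInf1 nInf2 α δ γ ε : ℝ)
    (p : ℝ × ℝ × EuclideanSpace ℝ (Fin d) × EuclideanSpace ℝ (Fin d) × ℝ × ℝ)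
    (v : EuclideanSpace ℝ (Fin d)) : ℝ :=
  let σ₁ := p.1
  let σ₂ := p.2.1
  let μ₁ := p.2.2.1
  let μ₂ := p.2.2.2.1
  let τ₁ := p.2.2.2.2.1
  let τ₂ := p.2.2.2.2.2
  let αt := ε * (1 - α)
  let δt := (m₁ / m₂) * ε * (1 - δ)
  let γt := (1 / (d : ℝ)) * ε * m₁ * (1 - δ) * ((m₁ / m₂) * ε * (δ - 1) + δ + 1) - ε * γ
  let n₁ := nInf1 + σ₁
  let n₂ := nInf2 + σ₂
  let P₁ := nInf1 + (1 / (d : ℝ)) * (τ₁ - m₁ * ‖μ₁‖ ^ 2 / n₁)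
  let P₂ := nInf2 + (1 / (d : ℝ)) * (τ₂ - m₂ * ‖μ₂‖ ^ 2 / n₂)
  let μ₂₁ := (δt * (n₂ / n₁)) • μ₁ + (1 - δt) • μ₂
  let P₂₁ := αt * (n₂ / n₁) * P₁ + (1 - αt) * P₂ + γt * ‖(n₂ / n₁) • μ₁ - μ₂‖ ^ 2 / n₂
  n₂ ^ ((1 : ℝ) + (d : ℝ) / 2) / (2 * Real.pi * P₂₁ / m₂) ^ ((d : ℝ) / 2) *
    Real.exp (-(m₂ * ‖n₂ • v - μ₂₁‖ ^ 2) / (2 * P₂₁ * n₂))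


open Topology

private theorem myDiv {E : Type*} [NormedAddCommGroup E] [NormedSpace ℝ E]
    {c den : E → ℝ} {c' d' : E →L[ℝ] ℝ} {x : E} (hc : HasFDerivAt c c' x)
    (hd : HasFDerivAt den d' x) (hx : den x ≠ 0) :
    HasFDerivAt (fun y => c y / den y)
      (c x • ((-(den x ^ 2)⁻¹) • d') + (den x)⁻¹ • c') x := by
  have h1 : HasFDerivAt (fun y => (den y)⁻¹) ((-(den x ^ 2)⁻¹) • d') x :=
    (hasDerivAt_inv hx).comp_hasFDerivAt x hd
  simpa only [div_eq_mul_inv, Pi.mul_def] using hc.mul h1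

/-- `sAux` packages `(n₂, P₂₁, n₂ • v − μ₂₁)` (with inner products instead of norms). -/
noncomputable def sAux (d : ℕ) (m₁ m₂ nInf1 nInf2 α δ γ ε : ℝ) (v : EuclideanSpace ℝ (Fin d))
    (p : ℝ × ℝ × EuclideanSpace ℝ (Fin d) × EuclideanSpace ℝ (Fin d) × ℝ × ℝ) :
    ℝ × ℝ × EuclideanSpace ℝ (Fin d) :=
  (nInf2 + p.2.1,
   (ε * (1 - α) * ((nInf2 + p.2.1) / (nInf1 + p.1)) *
        (nInf1 + (1 / (d : ℝ)) * (p.2.2.2.2.1 - m₁ * (inner ℝ p.2.2.1 p.2.2.1 : ℝ) / (nInf1 + p.1)))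
      + (1 - ε * (1 - α)) *
        (nInf2 + (1 / (d : ℝ)) *
          (p.2.2.2.2.2 - m₂ * (inner ℝ p.2.2.2.1 p.2.2.2.1 : ℝ) / (nInf2 + p.2.1)))
      + ((1 / (d : ℝ)) * ε * m₁ * (1 - δ) * ((m₁ / m₂) * ε * (δ - 1) + δ + 1) - ε * γ) *
          (inner ℝ (((nInf2 + p.2.1) / (nInf1 + p.1)) • p.2.2.1 - p.2.2.2.1)
                 (((nInf2 + p.2.1) / (nInf1 + p.1)) • p.2.2.1 - p.2.2.2.1) : ℝ) /
          (nInf2 + p.2.1),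
    (nInf2 + p.2.1) • v -
      (((m₁ / m₂) * ε * (1 - δ) * ((nInf2 + p.2.1) / (nInf1 + p.1))) • p.2.2.1
        + (1 - (m₁ / m₂) * ε * (1 - δ)) • p.2.2.2.1)))

/-- `psiAux` is the logarithm of the Maxwellian as a function of `(n₂, P₂₁, w)`. -/
noncomputable def psiAux (d : ℕ) (m₂ : ℝ) (z : ℝ × ℝ × EuclideanSpace ℝ (Fin d)) : ℝ :=
  (1 + (d : ℝ) / 2) * Real.log z.1 - (d : ℝ) / 2 * Real.log (2 * Real.pi * z.2.1 / m₂)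
    - m₂ * (inner ℝ z.2.2 z.2.2 : ℝ) / (2 * z.2.1 * z.1)

private theorem sAux_spec (d : ℕ) (hd : 1 ≤ d) (m₁ m₂ nInf1 nInf2 : ℝ)
    (hm₁ : 0 < m₁) (hm₂ : 0 < m₂) (hn₁ : 0 < nInf1) (hn₂ : 0 < nInf2) (α δ γ ε : ℝ)
    (hε : 0 < ε) (v : EuclideanSpace ℝ (Fin d)) :
    ∃ L : (ℝ × ℝ × EuclideanSpace ℝ (Fin d) × EuclideanSpace ℝ (Fin d) × ℝ × ℝ) →L[ℝ]
        (ℝ × ℝ × EuclideanSpace ℝ (Fin d)),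
      HasFDerivAt (sAux d m₁ m₂ nInf1 nInf2 α δ γ ε v) L 0 ∧
      sAux d m₁ m₂ nInf1 nInf2 α δ γ ε v 0 = (nInf2, (nInf2, nInf2 • v)) ∧
      ∀ t : ℝ × ℝ × EuclideanSpace ℝ (Fin d) × EuclideanSpace ℝ (Fin d) × ℝ × ℝ,
        L t = (t.2.1,
          (ε * (1 - α) * (t.2.1 - nInf2 / nInf1 * t.1 + nInf2 / nInf1 * (t.2.2.2.2.1 / d))
            + (1 - ε * (1 - α)) * (t.2.2.2.2.2 / d),
           t.2.1 • v - (((m₁ / m₂) * ε * (1 - δ) * (nInf2 / nInf1)) • t.2.2.1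
             + (1 - (m₁ / m₂) * ε * (1 - δ)) • t.2.2.2.1))) := by
  have hdR : (0:ℝ) < (d:ℝ) := by exact_mod_cast hd
  have hσ₁ := hasFDerivAt_fst (𝕜 := ℝ)
      (p := (0 : ℝ × ℝ × EuclideanSpace ℝ (Fin d) × EuclideanSpace ℝ (Fin d) × ℝ × ℝ))
  have hrest := hasFDerivAt_snd (𝕜 := ℝ)
      (p := (0 : ℝ × ℝ × EuclideanSpace ℝ (Fin d) × EuclideanSpace ℝ (Fin d) × ℝ × ℝ))
  have hσ₂ := hrest.fst
  have hμ₁ := hrest.snd.fst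
  have hμ₂ := hrest.snd.snd.fst
  have hτ₁ := hrest.snd.snd.snd.fst
  have hτ₂ := hrest.snd.snd.snd.snd
  have hN1 := hσ₁.const_add nInf1
  have hN2 := hσ₂.const_add nInf2
  have hN1ne : nInf1 + (0 : ℝ × ℝ × EuclideanSpace ℝ (Fin d) × EuclideanSpace ℝ (Fin d) × ℝ × ℝ).1
      ≠ 0 := by simpa using hn₁.ne'
  have hN2ne : nInf2 +
      (0 : ℝ × ℝ × EuclideanSpace ℝ (Fin d) × EuclideanSpace ℝ (Fin d) × ℝ × ℝ).2.1 ≠ 0 := by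
    simpa using hn₂.ne'
  have hq := myDiv hN2 hN1 hN1ne
  have hin1 := hμ₁.inner ℝ hμ₁
  have hP1 := ((hτ₁.sub (myDiv (hin1.const_mul m₁) hN1 hN1ne)).const_mul
      (1 / (d : ℝ))).const_add nInf1
  have hin2 := hμ₂.inner ℝ hμ₂
  have hP2 := ((hτ₂.sub (myDiv (hin2.const_mul m₂) hN2 hN2ne)).const_mul
      (1 / (d : ℝ))).const_add nInf2
  have hu := (hq.smul hμ₁).sub hμ₂
  have hinu := hu.inner ℝ hu
  have hP21 := (((hq.const_mul (ε * (1 - α))).mul hP1).add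
      (hP2.const_mul (1 - ε * (1 - α)))).add
      (myDiv (hinu.const_mul
        ((1 / (d : ℝ)) * ε * m₁ * (1 - δ) * ((m₁ / m₂) * ε * (δ - 1) + δ + 1) - ε * γ))
        hN2 hN2ne)
  have hμ21 := ((hq.const_mul ((m₁ / m₂) * ε * (1 - δ))).smul hμ₁).add
      (hμ₂.const_smul (1 - (m₁ / m₂) * ε * (1 - δ)))
  have hw := (hN2.smul_const v).sub hμ21
  refine ⟨_, hN2.prodMk (hP21.prodMk hw), ?_, ?_⟩
  · simp [sAux]
    field_simp
    ring
  · intro t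
    simp
    field_simp
    ring

private theorem psiAux_spec (d : ℕ) (m₂ nInf2 : ℝ) (hm₂ : 0 < m₂) (hn₂ : 0 < nInf2)
    (v : EuclideanSpace ℝ (Fin d)) :
    ∃ L : (ℝ × ℝ × EuclideanSpace ℝ (Fin d)) →L[ℝ] ℝ,
      HasFDerivAt (psiAux d m₂) L (nInf2, (nInf2, nInf2 • v)) ∧
      ∀ z : ℝ × ℝ × EuclideanSpace ℝ (Fin d),
        L z = (1 + (d : ℝ) / 2) / nInf2 * z.1 - (d : ℝ) / 2 / nInf2 * z.2.1
          - m₂ / nInf2 * (inner ℝ v z.2.2 : ℝ) + m₂ * ‖v‖ ^ 2 / (2 * nInf2) * (z.1 + z.2.1) := by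
  have ha := hasFDerivAt_fst (𝕜 := ℝ) (p := ((nInf2, (nInf2, nInf2 • v)) :
      ℝ × ℝ × EuclideanSpace ℝ (Fin d)))
  have hb := (hasFDerivAt_snd (𝕜 := ℝ) (p := ((nInf2, (nInf2, nInf2 • v)) :
      ℝ × ℝ × EuclideanSpace ℝ (Fin d)))).fst
  have hu := (hasFDerivAt_snd (𝕜 := ℝ) (p := ((nInf2, (nInf2, nInf2 • v)) :
      ℝ × ℝ × EuclideanSpace ℝ (Fin d)))).snd
  have t1 := (ha.log hn₂.ne').const_mul (1 + (d : ℝ) / 2)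
  have t2 := ((myDiv (hb.const_mul (2 * Real.pi))
      (hasFDerivAt_const m₂ ((nInf2, (nInf2, nInf2 • v)) : ℝ × ℝ × EuclideanSpace ℝ (Fin d)))
      hm₂.ne').log (by positivity)).const_mul ((d : ℝ) / 2)
  have hinn := hu.inner ℝ hu
  have t3 := myDiv (hinn.const_mul m₂) ((hb.const_mul 2).mul ha)
      (by simp; positivity)
  refine ⟨_, (t1.sub t2).sub t3, ?_⟩
  intro z
  simp only [ContinuousLinearMap.coe_sub', ContinuousLinearMap.coe_add',
    ContinuousLinearMap.coe_smul', ContinuousLinearMap.coe_comp', Function.comp_apply,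
    ContinuousLinearMap.add_apply, ContinuousLinearMap.smul_apply,
    ContinuousLinearMap.coe_fst', ContinuousLinearMap.coe_snd',
    ContinuousLinearMap.smulRight_apply, ContinuousLinearMap.prod_apply,
    ContinuousLinearMap.zero_apply, fderivInnerCLM_apply, Pi.sub_apply, Pi.add_apply,
    Pi.smul_apply, Pi.mul_apply, smul_eq_mul, real_inner_smul_left,
    real_inner_smul_right, real_inner_comm z.2.2 v]
  simp only [real_inner_self_eq_norm_sq]
  field_simp
  ring

/-- For `d ≥ 1`, `m₁, m₂ > 0`, `n_{∞,1}, n_{∞,2} > 0`, parameters `α, δ, γ` and `ε > 0`,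
the interspecies Maxwellian `M₂₁` is differentiable at the origin for each fixed `v`,
with the stated partial derivatives. -/
theorem interMaxwellian21_hasFDerivAt_zero (d : ℕ) (hd : 1 ≤ d) (m₁ m₂ nInf1 nInf2 : ℝ)
    (hm₁ : 0 < m₁) (hm₂ : 0 < m₂) (hn₁ : 0 < nInf1) (hn₂ : 0 < nInf2) (α δ γ ε : ℝ)
    (hε : 0 < ε) (v : EuclideanSpace ℝ (Fin d)) :
    ∃ L : (ℝ × ℝ × EuclideanSpace ℝ (Fin d) × EuclideanSpace ℝ (Fin d) × ℝ × ℝ) →L[ℝ] ℝ,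
      HasFDerivAt (fun p => interMaxwellian21 d m₁ m₂ nInf1 nInf2 α δ γ ε p v) L
        (0 : ℝ × ℝ × EuclideanSpace ℝ (Fin d) × EuclideanSpace ℝ (Fin d) × ℝ × ℝ) ∧
      ∀ (σ₁ σ₂ : ℝ) (μ₁ μ₂ : EuclideanSpace ℝ (Fin d)) (τ₁ τ₂ : ℝ),
        L (σ₁, σ₂, μ₁, μ₂, τ₁, τ₂) =
          equilMaxwellian2 d m₂ nInf2 v * (1 / (2 * nInf1)) * (ε * (1 - α)) * (d - m₂ * ‖v‖ ^ 2) * σ₁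
          + equilMaxwellian2 d m₂ nInf2 v * (1 / nInf2) *
              (1 + ((1 - ε * (1 - α)) / 2) * (d - m₂ * ‖v‖ ^ 2)) * σ₂
          + equilMaxwellian2 d m₂ nInf2 v * (ε * (1 - δ) * m₁ / nInf1) * (inner ℝ v μ₁ : ℝ)
          + equilMaxwellian2 d m₂ nInf2 v * ((1 - (m₁ / m₂) * ε * (1 - δ)) * m₂ / nInf2) *
              (inner ℝ v μ₂ : ℝ)
          + equilMaxwellian2 d m₂ nInf2 v * (ε * (1 - α) / (2 * nInf1)) *
              (m₂ * ‖v‖ ^ 2 / d - 1) * τ₁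
          + equilMaxwellian2 d m₂ nInf2 v * ((1 - ε * (1 - α)) / (2 * nInf2)) *
              (m₂ * ‖v‖ ^ 2 / d - 1) * τ₂ := by
  obtain ⟨Ls, hs, hs0, hsEval⟩ := sAux_spec d hd m₁ m₂ nInf1 nInf2 hm₁ hm₂ hn₁ hn₂ α δ γ ε hε v
  obtain ⟨LΨ, hΨ, hΨEval⟩ := psiAux_spec d m₂ nInf2 hm₂ hn₂ v
  rw [← hs0] at hΨ
  have hG := hΨ.comp (0 : ℝ × ℝ × EuclideanSpace ℝ (Fin d) × EuclideanSpace ℝ (Fin d) × ℝ × ℝ) hs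
  have hexp := hG.exp
  refine ⟨_, hexp.congr_of_eventuallyEq ?_, ?_⟩
  · have hco := hs.continuousAt
    have ev1 : ∀ᶠ p in 𝓝 (0 : ℝ × ℝ × EuclideanSpace ℝ (Fin d) × EuclideanSpace ℝ (Fin d) × ℝ × ℝ),
        0 < (sAux d m₁ m₂ nInf1 nInf2 α δ γ ε v p).1 :=
      hco.eventually_mem ((isOpen_lt continuous_const continuous_fst).mem_nhds
        (by rw [hs0]; simpa using hn₂))
    have ev2 : ∀ᶠ p in 𝓝 (0 : ℝ × ℝ × EuclideanSpace ℝ (Fin d) × EuclideanSpace ℝ (Fin d) × ℝ × ℝ),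
        0 < (sAux d m₁ m₂ nInf1 nInf2 α δ γ ε v p).2.1 :=
      hco.eventually_mem ((isOpen_lt continuous_const
        (continuous_fst.comp continuous_snd)).mem_nhds (by rw [hs0]; simpa using hn₂))
    filter_upwards [ev1, ev2] with p h1 h2
    simp only [sAux] at h1 h2
    simp only [Function.comp_apply, psiAux, sAux, interMaxwellian21]
    simp only [← real_inner_self_eq_norm_sq]
    rw [Real.rpow_def_of_pos h1, Real.rpow_def_of_pos
      (div_pos (mul_pos (by positivity) h2) hm₂), ← Real.exp_sub, ← Real.exp_add]
    congr 1
    ring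
  · intro σ₁ σ₂ μ₁ μ₂ τ₁ τ₂
    have hval : Real.exp ((psiAux d m₂ ∘ sAux d m₁ m₂ nInf1 nInf2 α δ γ ε v) 0)
        = equilMaxwellian2 d m₂ nInf2 v := by
      rw [Function.comp_apply, hs0]
      rw [show psiAux d m₂ ((nInf2, (nInf2, nInf2 • v)) : ℝ × ℝ × EuclideanSpace ℝ (Fin d))
          = Real.log nInf2 + Real.log (m₂ / (2 * Real.pi)) * ((d : ℝ) / 2)
            + (-m₂ * ‖v‖ ^ 2 / 2) by
        simp only [psiAux, real_inner_smul_left, real_inner_smul_right]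
        simp only [real_inner_self_eq_norm_sq]
        rw [Real.log_div (by positivity) hm₂.ne',
          Real.log_mul (by positivity) hn₂.ne',
          Real.log_div hm₂.ne' (by positivity)]
        field_simp
        ring]
      rw [Real.exp_add, Real.exp_add, Real.exp_log hn₂,
        ← Real.rpow_def_of_pos (by positivity)]
      simp [equilMaxwellian2]
    rw [ContinuousLinearMap.smul_apply, ContinuousLinearMap.comp_apply, hsEval, hΨEval, hval]
    simp only [smul_eq_mul, inner_sub_right, inner_add_right, real_inner_smul_right,
      real_inner_self_eq_norm_sq]
    have hdne : ((d : ℕ) : ℝ) ≠ 0 := by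
      have : 0 < d := hd
      exact_mod_cast this.ne'
    field_simp
    ring
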